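/- arXiv:1104.2761 — 2 statements merged into one kernel-verified Lean document; each statement's English description precedes it below -/
import Mathlib

section
/- Let R be a commutative ring and p₁, p₂ prime ideals of R with residue fields k(p_i) = (R/p_i)_{p_i}. Then Tor_n^R(k(p₁), k(p₂)) ≠ 0 for some n ≥ 0 (equivalently k(p₁) ⊗_R^L k(p₂) ≠ 0 in the derived category) if and only if p₁ = p₂. -/
open CategoryTheory

section TorAux

open CategoryTheory.Limits CategoryTheory.MonoidalCategory

variable {R : Type} [CommRing R]

private lemma single₀_map_smul' (B : ModuleCat R) (x : R) :
    (ChainComplex.single₀ (ModuleCat R)).map (x • 𝟙 B) =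
      x • 𝟙 ((ChainComplex.single₀ (ModuleCat R)).obj B) := by
  apply HomologicalComplex.hom_ext
  intro i
  match i with
  | 0 => simp; rfl
  | (i+1) =>
    apply (HomologicalComplex.isZero_single_obj_X (ComplexShape.down ℕ) 0 B _ (by simp)).eq_of_src

private lemma tor_map_smul' (n : ℕ) (A B : ModuleCat R) (x : R) :
    ((Tor (ModuleCat R) n).map (x • 𝟙 A)).app B =
      ((Tor (ModuleCat R) n).obj A).map (x • 𝟙 B) := by
  have P : ProjectiveResolution B := (HasProjectiveResolution.out).some
  show (NatTrans.leftDerived ((tensoringLeft (ModuleCat R)).map (x • 𝟙 A)) n).app B =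
    (Functor.leftDerived ((tensoringLeft (ModuleCat R)).obj A) n).map (x • 𝟙 B)
  rw [ProjectiveResolution.leftDerived_app_eq _ P n,
    Functor.leftDerived_map_eq _ n (x • 𝟙 B) (P := P) (Q := P) (x • 𝟙 P.complex) (by
      rw [single₀_map_smul']
      apply HomologicalComplex.hom_ext
      intro i
      simp [Linear.smul_comp, Linear.comp_smul])]
  have hch : (NatTrans.mapHomologicalComplex ((tensoringLeft (ModuleCat R)).map (x • 𝟙 A))
        (ComplexShape.down ℕ)).app P.complex =
      (((tensoringLeft (ModuleCat R)).obj A).mapHomologicalComplex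
        (ComplexShape.down ℕ)).map (x • 𝟙 P.complex) := by
    apply HomologicalComplex.hom_ext
    intro i
    simp [MonoidalLinear.smul_whiskerRight, MonoidalLinear.whiskerLeft_smul]; rfl
  rw [hch]
  rfl

private lemma tor_obj_map_zero' (n : ℕ) (A B : ModuleCat R) :
    ((Tor (ModuleCat R) n).obj A).map ((0 : R) • 𝟙 B) = 0 := by
  have P : ProjectiveResolution B := (HasProjectiveResolution.out).some
  show (Functor.leftDerived ((tensoringLeft (ModuleCat R)).obj A) n).map ((0 : R) • 𝟙 B) = 0
  rw [Functor.leftDerived_map_eq _ n ((0 : R) • 𝟙 B) (P := P) (Q := P)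
      ((0 : R) • 𝟙 P.complex) (by
      rw [single₀_map_smul']
      apply HomologicalComplex.hom_ext
      intro i
      simp [Linear.smul_comp, Linear.comp_smul])]
  rw [zero_smul]
  simp
  exact Limits.zero_comp

private lemma isZero_of_isIso_eq_zero' {T : ModuleCat R} (f : T ⟶ T) [IsIso f] (hf : f = 0) :
    IsZero T := by
  rw [IsZero.iff_id_eq_zero, ← IsIso.inv_hom_id f]
  have h2 := congrArg (fun g => inv f ≫ g) hf
  simpa using h2

private lemma nonzero_tor_zero (A : ModuleCat R)
    (hmul : ¬ Subsingleton (TensorProduct R A A)) :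
    ¬ IsZero (((Tor (ModuleCat R) 0).obj A).obj A) := by
  intro hz
  letI : PreservesFiniteColimits ((tensoringLeft (ModuleCat R)).obj A) :=
    inferInstanceAs (PreservesFiniteColimits (tensorLeft A))
  have e : ((Tor (ModuleCat R) 0).obj A).obj A ≅ A ⊗ A :=
    (((tensoringLeft (ModuleCat R)).obj A).leftDerivedZeroIsoSelf).app A
  have hz2 : IsZero (A ⊗ A) := hz.of_iso e.symm
  apply hmul
  constructor
  intro a b
  have h1 : (𝟙 (A ⊗ A) : A ⊗ A ⟶ A ⊗ A) = 0 := hz2.eq_of_src _ _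
  have hall : ∀ z : (A ⊗ A : ModuleCat R), z = 0 := by
    intro z
    have := congrArg (fun f => (f : (A ⊗ A : ModuleCat R) ⟶ _) z) h1
    simpa using this
  exact (hall a).trans (hall b).symm

end TorAux

/-- The residue field `k(p) = (R/p)_p` of a commutative ring `R` at a prime
ideal `p`, as an `R`-module (an object of `ModuleCat R`). -/
noncomputable def residueFieldAt (R : Type) [CommRing R] (p : Ideal R) [p.IsPrime] :
    ModuleCat R :=
  ModuleCat.of R (IsLocalRing.ResidueField (Localization.AtPrime p))

section ResidueAux

variable {R : Type} [CommRing R]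

private lemma algebraMap_residueFieldAt_eq_zero_iff (p : Ideal R) [p.IsPrime] (x : R) :
    algebraMap R (IsLocalRing.ResidueField (Localization.AtPrime p)) x = 0 ↔ x ∈ p := by
  rw [IsScalarTower.algebraMap_apply R (Localization.AtPrime p)
    (IsLocalRing.ResidueField (Localization.AtPrime p))]
  exact Ideal.Quotient.eq_zero_iff_mem.trans
    (IsLocalization.AtPrime.to_map_mem_maximal_iff _ p x)

private lemma smul_id_residueFieldAt_eq_zero (p : Ideal R) [p.IsPrime] {x : R} (hx : x ∈ p) :
    x • 𝟙 (residueFieldAt R p) = 0 := by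
  have h : (x • LinearMap.id : IsLocalRing.ResidueField (Localization.AtPrime p) →ₗ[R]
      IsLocalRing.ResidueField (Localization.AtPrime p)) = 0 := by
    ext a
    show x • a = 0
    rw [Algebra.smul_def, (algebraMap_residueFieldAt_eq_zero_iff p x).2 hx, zero_mul]
  exact ModuleCat.hom_ext h

private lemma isIso_smul_id_residueFieldAt (p : Ideal R) [p.IsPrime] {x : R} (hx : x ∉ p) :
    IsIso (x • 𝟙 (residueFieldAt R p)) := by
  have hc : algebraMap R (IsLocalRing.ResidueField (Localization.AtPrime p)) x ≠ 0 := fun h =>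
    hx ((algebraMap_residueFieldAt_eq_zero_iff p x).1 h)
  set c := algebraMap R (IsLocalRing.ResidueField (Localization.AtPrime p)) x with hcdef
  have hsm : ∀ a : IsLocalRing.ResidueField (Localization.AtPrime p), x • a = c * a := fun a =>
    Algebra.smul_def x a
  refine ⟨⟨ModuleCat.ofHom (show IsLocalRing.ResidueField (Localization.AtPrime p) →ₗ[R]
      IsLocalRing.ResidueField (Localization.AtPrime p) from
    { toFun := fun a => c⁻¹ * a
      map_add' := fun a b => mul_add _ a b
      map_smul' := fun r a => by simpa using (mul_smul_comm r c⁻¹ a).symm }), ?_, ?_⟩⟩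
  · exact ModuleCat.hom_ext <| LinearMap.ext fun (a : IsLocalRing.ResidueField (Localization.AtPrime p)) => by
      show c⁻¹ * (x • a) = a
      rw [hsm, ← mul_assoc, inv_mul_cancel₀ hc, one_mul]
  · exact ModuleCat.hom_ext <| LinearMap.ext fun (a : IsLocalRing.ResidueField (Localization.AtPrime p)) => by
      show x • (c⁻¹ * a) = a
      rw [hsm, ← mul_assoc, mul_inv_cancel₀ hc, one_mul]

end ResidueAux

/-- Let `R` be a commutative ring and `p₁, p₂` prime ideals of `R` with residue
fields `k(pᵢ) = (R/pᵢ)_{pᵢ}`.  Then `Tor_n^R(k(p₁), k(p₂)) ≠ 0` for some `n ≥ 0`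
(equivalently `k(p₁) ⊗_R^L k(p₂) ≠ 0` in the derived category) if and only if
`p₁ = p₂`. -/
theorem stmt8 (R : Type) [CommRing R] (p₁ p₂ : Ideal R) [p₁.IsPrime] [p₂.IsPrime] :
    (∃ n : ℕ, ¬ Limits.IsZero
        (((Tor (ModuleCat R) n).obj (residueFieldAt R p₁)).obj (residueFieldAt R p₂)))
      ↔ p₁ = p₂ := by
  constructor
  · rintro ⟨n, hn⟩
    by_contra hne
    apply hn
    have hor : ¬ p₁ ≤ p₂ ∨ ¬ p₂ ≤ p₁ := by
      by_contra h
      push_neg at h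
      exact hne (le_antisymm h.1 h.2)
    set A := residueFieldAt R p₁ with hA
    set B := residueFieldAt R p₂ with hB
    rcases hor with h | h
    · obtain ⟨x, hx1, hx2⟩ := SetLike.not_le_iff_exists.mp h
      haveI : IsIso (x • 𝟙 B) := isIso_smul_id_residueFieldAt p₂ hx2
      haveI : IsIso (((Tor (ModuleCat R) n).obj A).map (x • 𝟙 B)) := inferInstance
      refine isZero_of_isIso_eq_zero' (((Tor (ModuleCat R) n).obj A).map (x • 𝟙 B)) ?_
      rw [← tor_map_smul', smul_id_residueFieldAt_eq_zero p₁ hx1,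
        show (0 : A ⟶ A) = (0 : R) • 𝟙 A by rw [zero_smul], tor_map_smul']
      exact tor_obj_map_zero' n A B
    · obtain ⟨x, hx1, hx2⟩ := SetLike.not_le_iff_exists.mp h
      haveI : IsIso (x • 𝟙 A) := isIso_smul_id_residueFieldAt p₁ hx2
      haveI : IsIso ((Tor (ModuleCat R) n).map (x • 𝟙 A)) := inferInstance
      haveI : IsIso (((Tor (ModuleCat R) n).map (x • 𝟙 A)).app B) := inferInstance
      refine isZero_of_isIso_eq_zero' (((Tor (ModuleCat R) n).map (x • 𝟙 A)).app B) ?_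
      rw [tor_map_smul', smul_id_residueFieldAt_eq_zero p₂ hx1,
        show (0 : B ⟶ B) = (0 : R) • 𝟙 B by rw [zero_smul]]
      exact tor_obj_map_zero' n A B
  · rintro rfl
    refine ⟨0, nonzero_tor_zero (residueFieldAt R p₁) ?_⟩
    intro hs
    have h1 : ((1 : IsLocalRing.ResidueField (Localization.AtPrime p₁)) ⊗ₜ[R]
        (1 : IsLocalRing.ResidueField (Localization.AtPrime p₁)) :
        TensorProduct R (IsLocalRing.ResidueField (Localization.AtPrime p₁))
          (IsLocalRing.ResidueField (Localization.AtPrime p₁))) = 0 := @Subsingleton.elim _ hs _ _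
    have h2 := congrArg (LinearMap.mul' R (IsLocalRing.ResidueField (Localization.AtPrime p₁))) h1
    rw [LinearMap.mul'_apply, mul_one, map_zero] at h2
    exact one_ne_zero h2
end

section
/- Let 𝒯 be a tensor triangulated category with arbitrary coproducts, compactly generated by the shifts of its unit 𝟙, such that Hom(Σ^n 𝟙, 𝟙) = 0 for n ≠ 0 and F := End(𝟙) is a field. Then every object of 𝒯 is isomorphic to a coproduct of shifts of 𝟙, and the functor X ↦ π_*(X) = Hom(Σ^* 𝟙, X) is an equivalence between 𝒯 and the category of ℤ-graded F-vector spaces. -/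
set_option linter.unusedSectionVars false
set_option linter.unusedVariables false
set_option maxHeartbeats 1000000
set_option synthInstance.maxHeartbeats 400000
open CategoryTheory Limits Pretriangulated MonoidalCategory DirectSum
universe u
namespace Stmt17Aux
variable {C : Type u} [Category.{0} C] [Preadditive C]
  [HasShift C ℤ] [∀ n : ℤ, (shiftFunctor C n).Additive]
  [MonoidalCategory C] [HasCoproducts.{0} C]
variable (F : Type) [Field F] (e : F ≃+* End (𝟙_ C))

/-- scalar action on `Hom(𝟙⟦n⟧, X)` -/
noncomputable def piSMul (n : ℤ) {X : C} (r : F) (f : (𝟙_ C)⟦n⟧ ⟶ X) :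
    (𝟙_ C)⟦n⟧ ⟶ X :=
  (shiftFunctor C n).map (e r) ≫ f

noncomputable def piModule (n : ℤ) (X : C) : Module F ((𝟙_ C)⟦n⟧ ⟶ X) where
  smul := piSMul F e n
  one_smul f := by
    show piSMul F e n _ _ = _
    unfold piSMul
    rw [show ((e 1 : End (𝟙_ C)) : 𝟙_ C ⟶ 𝟙_ C) = 𝟙 (𝟙_ C) from map_one e]
    simp
  mul_smul r s f := by
    show piSMul F e n _ _ = piSMul F e n _ (piSMul F e n _ _)
    simp only [piSMul, mul_comm r s, map_mul, End.mul_def, Functor.map_comp,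
      Category.assoc]
  smul_zero r := by
    show piSMul F e n _ _ = _
    simp [piSMul]
  smul_add r f g := by
    show piSMul F e n _ _ = piSMul F e n _ _ + piSMul F e n _ _
    simp [piSMul, Preadditive.comp_add]
  add_smul r s f := by
    show piSMul F e n _ _ = piSMul F e n _ _ + piSMul F e n _ _
    unfold piSMul
    rw [show ((e (r + s) : End (𝟙_ C)) : 𝟙_ C ⟶ 𝟙_ C) =
        ((e r : 𝟙_ C ⟶ 𝟙_ C) + (e s : 𝟙_ C ⟶ 𝟙_ C)) from map_add e r s,
      Functor.map_add, Preadditive.add_comp]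
  zero_smul f := by
    show piSMul F e n _ _ = _
    simp [piSMul, map_zero]

/-- `Hom(𝟙⟦n⟧, X)` as an object of `ModuleCat F`. -/
noncomputable def piMod (n : ℤ) (X : C) : ModuleCat F :=
  @ModuleCat.of F _ ((𝟙_ C)⟦n⟧ ⟶ X) _ (piModule F e n X)

lemma piMod_smul (n : ℤ) (X : C) (r : F) (f : piMod F e n X) :
    r • f = (shiftFunctor C n).map (e r) ≫ f := rfl

/-- postcomposition as a linear map -/
noncomputable def piMap (n : ℤ) {X Y : C} (f : X ⟶ Y) :
    piMod F e n X ⟶ piMod F e n Y :=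
  letI := piModule F e n X; letI := piModule F e n Y; ModuleCat.ofHom
  { toFun := fun g => g ≫ f
    map_add' := fun g h => Preadditive.add_comp _ _ _ _ _ _
    map_smul' := fun r g => by
      exact Category.assoc _ _ _ }

@[simp] lemma piMap_apply (n : ℤ) {X Y : C} (f : X ⟶ Y) (g : piMod F e n X) :
    piMap F e n f g = g ≫ f := rfl

/-- the functor `C ⥤ (Discrete ℤ ⥤ ModuleCat F)` -/
noncomputable def EF : C ⥤ (Discrete ℤ ⥤ ModuleCat F) where
  obj X := Discrete.functor (fun n => piMod F e n X)
  map f := Discrete.natTrans (fun n => piMap F e n.as f)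
  map_id X := by
    apply NatTrans.ext
    funext n
    apply ModuleCat.hom_ext
    apply LinearMap.ext
    intro g
    show g ≫ 𝟙 X = g
    exact Category.comp_id _
  map_comp f g := by
    apply NatTrans.ext
    funext n
    apply ModuleCat.hom_ext
    apply LinearMap.ext
    intro x
    show x ≫ (f ≫ g) = (x ≫ f) ≫ g
    exact (Category.assoc _ _ _).symm

/-- shifting as an additive equivalence of hom groups -/
noncomputable def shiftHom (a : ℤ) {X Y : C} : (X ⟶ Y) ≃+ ((X⟦a⟧ : C) ⟶ Y⟦a⟧) :=
  AddEquiv.mk'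
    (Functor.FullyFaithful.homEquiv
      (Functor.FullyFaithful.ofFullyFaithful (shiftFunctor C a)))
    (fun f g => (shiftFunctor C a).map_add)

@[simp] lemma shiftHom_apply (a : ℤ) {X Y : C} (f : X ⟶ Y) :
    shiftHom a f = (shiftFunctor C a).map f := rfl

/-- conjugating by isomorphisms as an additive equivalence of hom groups -/
noncomputable def isoHom {X X' Y Y' : C} (i : X' ≅ X) (j : Y ≅ Y') :
    (X ⟶ Y) ≃+ (X' ⟶ Y') :=
  AddEquiv.mk' (Iso.homCongr i.symm j)
    (fun f g => by simp [Iso.homCongr, Preadditive.comp_add, Preadditive.add_comp])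

@[simp] lemma isoHom_apply {X X' Y Y' : C} (i : X' ≅ X) (j : Y ≅ Y') (f : X ⟶ Y) :
    isoHom i j f = i.hom ≫ f ≫ j.hom := rfl

/-- `Hom(𝟙⟦n⟧, Z) ≃+ Hom(𝟙, Z⟦-n⟧)` -/
noncomputable def eps (n : ℤ) (Z : C) :
    ((𝟙_ C)⟦n⟧ ⟶ Z) ≃+ ((𝟙_ C) ⟶ (Z⟦-n⟧ : C)) :=
  (shiftHom (-n)).trans
    (isoHom (((shiftFunctorCompIsoId C n (-n) (add_neg_cancel n)).app (𝟙_ C)).symm)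
      (Iso.refl _))

lemma eps_apply (n : ℤ) (Z : C) (g : (𝟙_ C)⟦n⟧ ⟶ Z) :
    eps n Z g = (shiftFunctorCompIsoId C n (-n) (add_neg_cancel n)).inv.app (𝟙_ C) ≫
      (shiftFunctor C (-n)).map g := by
  simp [eps]

lemma eps_natural (n : ℤ) {Z Z' : C} (g : (𝟙_ C)⟦n⟧ ⟶ Z) (h : Z ⟶ Z') :
    eps n Z' (g ≫ h) = eps n Z g ≫ (shiftFunctor C (-n)).map h := by
  simp [eps_apply, Functor.map_comp]

/-- transfer of homs out of shifts of the unit along a shift by `1` of the target -/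
noncomputable def tau (n : ℤ) (Y : C) :
    ((𝟙_ C)⟦n⟧ ⟶ (Y⟦(1:ℤ)⟧ : C)) ≃+ ((𝟙_ C)⟦n - 1⟧ ⟶ Y) :=
  (shiftHom (-1)).trans
    (isoHom ((shiftFunctorAdd' C n (-1) (n-1) (by ring)).app (𝟙_ C))
      ((shiftFunctorCompIsoId C 1 (-1) (by ring)).app Y))

lemma tau_apply (n : ℤ) (Y : C) (g : (𝟙_ C)⟦n⟧ ⟶ (Y⟦(1:ℤ)⟧ : C)) :
    tau n Y g = ((shiftFunctorAdd' C n (-1) (n-1) (by ring)).hom.app (𝟙_ C)) ≫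
      (shiftFunctor C (-1)).map g ≫
      (shiftFunctorCompIsoId C 1 (-1) (by ring)).hom.app Y := by
  simp [tau]

lemma tau_natural (n : ℤ) {Y Z : C} (g : (𝟙_ C)⟦n⟧ ⟶ (Y⟦(1:ℤ)⟧ : C)) (h : Y ⟶ Z) :
    tau n Z (g ≫ (shiftFunctor C (1:ℤ)).map h) = tau n Y g ≫ h := by
  have hnat := (shiftFunctorCompIsoId C 1 (-1) (by ring)).hom.naturality h
  simp only [Functor.comp_map, Functor.id_map] at hnat
  simp [tau_apply, Functor.map_comp, ← hnat]

variable (hconc : ∀ n : ℤ, n ≠ 0 → ∀ f : (𝟙_ C)⟦n⟧ ⟶ 𝟙_ C, f = 0)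

include hconc in
/-- homs between distinct shifts of the unit vanish -/
lemma hom_shift_eq_zero {n m : ℤ} (h : n ≠ m) (x : (𝟙_ C)⟦n⟧ ⟶ (𝟙_ C)⟦m⟧) :
    x = 0 := by
  let χ : ((𝟙_ C)⟦n⟧ ⟶ ((𝟙_ C)⟦m⟧ : C)) ≃+ ((𝟙_ C)⟦n - m⟧ ⟶ 𝟙_ C) :=
    (shiftHom (-m)).trans
      (isoHom ((shiftFunctorAdd' C n (-m) (n-m) (by ring)).app (𝟙_ C))
        ((shiftFunctorCompIsoId C m (-m) (add_neg_cancel m)).app (𝟙_ C)))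
  have h0 : χ x = 0 := hconc (n - m) (by omega) _
  have := χ.injective (h0.trans (map_zero χ).symm)
  simpa using this

omit [HasCoproducts.{0} C] in
lemma exists_scalar (n : ℤ) (x : (𝟙_ C)⟦n⟧ ⟶ (𝟙_ C)⟦n⟧) :
    ∃ r : F, x = (shiftFunctor C n).map (e r) := by
  obtain ⟨y, hy⟩ := (shiftFunctor C n).map_surjective x
  exact ⟨e.symm y, by simp [hy.symm]⟩

lemma scalar_injective (n : ℤ) {r s : F}
    (h : (shiftFunctor C n).map (e r) = (shiftFunctor C n).map (e s)) : r = s :=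
  e.injective ((shiftFunctor C n).map_injective h)

lemma compact_shift
    (hcompact : ∀ (ι : Type) [DecidableEq ι] (g : ι → C),
      Function.Bijective
        (⇑(DirectSum.toAddMonoid
            (fun i => Preadditive.rightComp (𝟙_ C) (Sigma.ι g i)) :
          (⨁ i : ι, ((𝟙_ C) ⟶ g i)) →+ ((𝟙_ C) ⟶ ∐ g))))
    (n : ℤ) (ι : Type) [DecidableEq ι] (g : ι → C) :
    Function.Bijective
      (⇑(DirectSum.toAddMonoid
          (fun i => Preadditive.rightComp ((𝟙_ C)⟦n⟧) (Sigma.ι g i)) :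
        (⨁ i : ι, ((𝟙_ C)⟦n⟧ ⟶ g i)) →+ ((𝟙_ C)⟦n⟧ ⟶ ∐ g))) := by
  set g' : ι → C := fun i => (g i)⟦(-n)⟧ with hg'
  set T : (⨁ i : ι, ((𝟙_ C)⟦n⟧ ⟶ g i)) →+ ((𝟙_ C)⟦n⟧ ⟶ ∐ g) :=
    DirectSum.toAddMonoid (fun i => Preadditive.rightComp ((𝟙_ C)⟦n⟧) (Sigma.ι g i))
  set T0 : (⨁ i : ι, ((𝟙_ C) ⟶ g' i)) →+ ((𝟙_ C) ⟶ ∐ g') :=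
    DirectSum.toAddMonoid (fun i => Preadditive.rightComp (𝟙_ C) (Sigma.ι g' i))
  have hT0 : Function.Bijective ⇑T0 := hcompact ι g'
  set E1 : (⨁ i : ι, ((𝟙_ C)⟦n⟧ ⟶ g i)) ≃+ (⨁ i : ι, ((𝟙_ C) ⟶ g' i)) :=
    DFinsupp.mapRange.addEquiv (fun i => eps n (g i))
  have sciso : IsIso (sigmaComparison (shiftFunctor C (-n)) g) := inferInstance
  set E2 : ((𝟙_ C)⟦n⟧ ⟶ ∐ g) ≃+ ((𝟙_ C) ⟶ ∐ g') :=
    (eps n (∐ g)).trans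
      (isoHom (Iso.refl _) (asIso (sigmaComparison (shiftFunctor C (-n)) g)).symm)
  have hsq : ∀ v, E2 (T v) = T0 (E1 v) := by
    have key : (E2.toAddMonoidHom.comp T) = T0.comp E1.toAddMonoidHom := by
      apply DirectSum.addHom_ext
      intro i x
      simp only [AddMonoidHom.comp_apply, AddEquiv.coe_toAddMonoidHom]
      have h1 : T (DirectSum.of _ i x) = x ≫ Sigma.ι g i := by
        simp [T, DirectSum.toAddMonoid_of]
        rfl
      have h2 : E1 (DirectSum.of _ i x) = DirectSum.of _ i (eps n (g i) x) :=
        DFinsupp.mapRange_single (f := fun i => ⇑(eps n (g i)))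
          (hf := fun i => map_zero _) (i := i) (b := x)
      rw [h1, h2, DirectSum.toAddMonoid_of]
      have h4 : E2 (x ≫ Sigma.ι g i) =
          eps n (∐ g) (x ≫ Sigma.ι g i) ≫
            inv (sigmaComparison (shiftFunctor C (-n)) g) := by
        simp [E2]
      have h3 : (shiftFunctor C (-n)).map (Sigma.ι g i) ≫
          inv (sigmaComparison (shiftFunctor C (-n)) g) = Sigma.ι g' i := by
        rw [IsIso.comp_inv_eq, ι_comp_sigmaComparison]
      rw [h4, eps_natural]
      simp only [Category.assoc, h3]
      rfl
    intro v
    have := DFunLike.congr_fun key v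
    simpa using this
  have hfun : ⇑T = ⇑E2.symm ∘ ⇑T0 ∘ ⇑E1 := by
    funext v
    simp [Function.comp, ← hsq v]
  rw [hfun]
  exact E2.symm.bijective.comp (hT0.comp E1.bijective)


/-- the scalars as a linear equivalence onto `End(𝟙⟦n⟧)` -/
noncomputable def scalarMap (n : ℤ) : F →ₗ[F] ↥(piMod F e n ((𝟙_ C)⟦n⟧)) where
  toFun r := (shiftFunctor C n).map (e r)
  map_add' r s := by
    show (shiftFunctor C n).map (e (r + s)) = _
    rw [show ((e (r + s) : End (𝟙_ C)) : 𝟙_ C ⟶ 𝟙_ C) =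
        ((e r : 𝟙_ C ⟶ 𝟙_ C) + (e s : 𝟙_ C ⟶ 𝟙_ C)) from map_add e r s,
      Functor.map_add]
    rfl
  map_smul' r s := by
    simp only [RingHom.id_apply]
    erw [piMod_smul]
    rw [← Functor.map_comp]
    congr 1
    rw [show ((e r : 𝟙_ C ⟶ 𝟙_ C) ≫ (e s : 𝟙_ C ⟶ 𝟙_ C)) =
        ((e s * e r : End (𝟙_ C)) : 𝟙_ C ⟶ 𝟙_ C) from rfl,
      ← map_mul, mul_comm s r, smul_eq_mul]

lemma scalarMap_bijective (n : ℤ) : Function.Bijective (scalarMap F e n) := by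
  constructor
  · intro r s h
    exact scalar_injective F e n h
  · intro x
    obtain ⟨r, hr⟩ := exists_scalar F e n x
    exact ⟨r, hr.symm⟩

/-- `F ≃ₗ End(𝟙⟦n⟧)` -/
noncomputable def scalarEquiv (n : ℤ) : F ≃ₗ[F] ↥(piMod F e n ((𝟙_ C)⟦n⟧)) :=
  LinearEquiv.ofBijective (scalarMap F e n) (scalarMap_bijective F e n)

lemma key_bijective (hconc : ∀ n : ℤ, n ≠ 0 → ∀ f : (𝟙_ C)⟦n⟧ ⟶ 𝟙_ C, f = 0)
    (n : ℤ) (ι : Type) [DecidableEq ι] (d : ι → ℤ)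
    (V : Type) [AddCommGroup V] [Module F V]
    (φ : ∀ i : ι, ↥(piMod F e n ((𝟙_ C)⟦d i⟧)) →ₗ[F] V)
    (bV : Module.Basis {i : ι // d i = n} F V)
    (hφ : ∀ (i : ι) (h : d i = n),
      φ i (eqToHom (show ((𝟙_ C)⟦n⟧ : C) = (𝟙_ C)⟦d i⟧ by rw [h])) = bV ⟨i, h⟩) :
    Function.Bijective ⇑(DirectSum.toModule F ι V φ) := by
  set TL := DirectSum.toModule F ι V φ with hTL
  set U : V →ₗ[F] ⨁ i : ι, ↥(piMod F e n ((𝟙_ C)⟦d i⟧)) :=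
    Module.Basis.constr bV F (fun j => DirectSum.lof F ι _ j.1
      (eqToHom (show ((𝟙_ C)⟦n⟧ : C) = (𝟙_ C)⟦d j.1⟧ by rw [j.2]))) with hU
  have h1 : TL.comp U = LinearMap.id := by
    apply Module.Basis.ext bV
    intro j
    rw [LinearMap.comp_apply, hU, Module.Basis.constr_basis, LinearMap.id_apply,
      hTL]
    erw [DirectSum.toModule_lof]
    exact hφ j.1 j.2
  have h2 : U.comp TL = LinearMap.id := by
    apply DirectSum.linearMap_ext
    intro i
    apply LinearMap.ext
    intro x
    rw [LinearMap.comp_apply, LinearMap.comp_apply, DirectSum.toModule_lof,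
      LinearMap.id_comp]
    by_cases h : d i = n
    · subst h
      obtain ⟨r, hr⟩ := (scalarMap_bijective F e (d i)).2 x
      have h1 : scalarMap F e (d i) r = r • scalarMap F e (d i) 1 := by
        rw [← map_smul, smul_eq_mul, mul_one]
      have h2 : scalarMap F e (d i) 1 =
          eqToHom (show ((𝟙_ C)⟦d i⟧ : C) = (𝟙_ C)⟦d i⟧ from rfl) := by
        show (shiftFunctor C (d i)).map (e 1) = _
        rw [show ((e 1 : End (𝟙_ C)) : 𝟙_ C ⟶ 𝟙_ C) = 𝟙 (𝟙_ C) from map_one e]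
        simp
      rw [← hr, h1, map_smul, h2, hφ i rfl, map_smul, hU, Module.Basis.constr_basis]
      exact (map_smul _ _ _).symm
    · have hx : x = 0 := hom_shift_eq_zero hconc (fun hh => h hh.symm) x
      rw [hx, map_zero, map_zero, map_zero]
  constructor
  · intro a b hab
    have := congrArg U hab
    rwa [show U (TL a) = a from DFunLike.congr_fun h2 a,
      show U (TL b) = b from DFunLike.congr_fun h2 b] at this
  · intro v
    exact ⟨U v, DFunLike.congr_fun h1 v⟩

/-- the compactness comparison map as a linear map -/
noncomputable def TL (n : ℤ) (ι : Type) [DecidableEq ι] (g : ι → C) :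
    (⨁ i : ι, ↥(piMod F e n (g i))) →ₗ[F] ↥(piMod F e n (∐ g)) :=
  DirectSum.toModule F ι _ (fun i => (piMap F e n (Sigma.ι g i)).hom)

lemma TL_coe (n : ℤ) (ι : Type) [DecidableEq ι] (g : ι → C) :
    ⇑(TL F e n ι g) =
      ⇑(DirectSum.toAddMonoid
          (fun i => Preadditive.rightComp ((𝟙_ C)⟦n⟧) (Sigma.ι g i)) :
        (⨁ i : ι, ((𝟙_ C)⟦n⟧ ⟶ g i)) →+ ((𝟙_ C)⟦n⟧ ⟶ ∐ g)) := by
  have : (TL F e n ι g).toAddMonoidHom =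
      (DirectSum.toAddMonoid
        (fun i => Preadditive.rightComp ((𝟙_ C)⟦n⟧) (Sigma.ι g i))) := by
    apply DirectSum.addHom_ext
    intro i x
    show TL F e n ι g (DirectSum.lof F ι (fun i => ↥(piMod F e n (g i))) i x) =
      (DirectSum.toAddMonoid
          (fun i => Preadditive.rightComp ((𝟙_ C)⟦n⟧) (Sigma.ι g i)))
        (DirectSum.of (fun i : ι => (((𝟙_ C)⟦n⟧ : C) ⟶ g i)) i x)
    erw [DirectSum.toAddMonoid_of]
    rw [TL]
    erw [DirectSum.toModule_lof]
    rfl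
  exact congrArg (fun (ψ : _ →+ _) => ⇑ψ) this

lemma TL_bijective
    (hcompact : ∀ (ι : Type) [DecidableEq ι] (g : ι → C),
      Function.Bijective
        (⇑(DirectSum.toAddMonoid
            (fun i => Preadditive.rightComp (𝟙_ C) (Sigma.ι g i)) :
          (⨁ i : ι, ((𝟙_ C) ⟶ g i)) →+ ((𝟙_ C) ⟶ ∐ g))))
    (n : ℤ) (ι : Type) [DecidableEq ι] (g : ι → C) :
    Function.Bijective ⇑(TL F e n ι g) := by
  rw [TL_coe]
  exact compact_shift hcompact n ι g

section Triangulated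
variable [HasZeroObject C] [Pretriangulated C]

include F e in
lemma exists_decomposition
    (hcompact : ∀ (ι : Type) [DecidableEq ι] (g : ι → C),
      Function.Bijective
        (⇑(DirectSum.toAddMonoid
            (fun i => Preadditive.rightComp (𝟙_ C) (Sigma.ι g i)) :
          (⨁ i : ι, ((𝟙_ C) ⟶ g i)) →+ ((𝟙_ C) ⟶ ∐ g))))
    (hgen : ∀ X : C, (∀ (n : ℤ) (f : (𝟙_ C)⟦n⟧ ⟶ X), f = 0) → IsZero X)
    (hconc : ∀ n : ℤ, n ≠ 0 → ∀ f : (𝟙_ C)⟦n⟧ ⟶ 𝟙_ C, f = 0)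
    (X : C) :
    ∃ (ι : Type) (d : ι → ℤ),
      Nonempty ((∐ fun i : ι => ((𝟙_ C)⟦d i⟧ : C)) ≅ X) := by
  classical
  set B : ∀ n : ℤ, Module.Basis _ F ↥(piMod F e n X) :=
    fun n => Module.Basis.ofVectorSpace F ↥(piMod F e n X) with hB
  set ι := Σ n : ℤ, ↥(Module.Basis.ofVectorSpaceIndex F ↥(piMod F e n X)) with hι
  set d : ι → ℤ := Sigma.fst with hd
  set G : ι → C := fun i => (𝟙_ C)⟦d i⟧ with hG
  haveI : HasColimitsOfShape (Discrete ι) C := (inferInstance : HasCoproducts.{0} C) ι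
  set b : ∀ i : ι, (((𝟙_ C)⟦d i⟧ : C) ⟶ X) :=
    fun i => (B i.1 i.2 : ↥(piMod F e (d i) X)) with hb
  set f : (∐ G) ⟶ X := Sigma.desc b with hf
  have hbij : ∀ n : ℤ,
      Function.Bijective (fun y : (((𝟙_ C)⟦n⟧ : C) ⟶ ∐ G) => y ≫ f) := by
    intro n
    have hT := TL_bijective F e hcompact n ι G
    set φ : ∀ i : ι, ↥(piMod F e n ((𝟙_ C)⟦d i⟧)) →ₗ[F] ↥(piMod F e n X) :=
      fun i => (piMap F e n (b i)).hom with hφdef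
    set κ : {i : ι // d i = n} ≃ ↥(Module.Basis.ofVectorSpaceIndex F ↥(piMod F e n X)) :=
      { toFun := fun p => p.2 ▸ p.1.2
        invFun := fun s => ⟨⟨n, s⟩, rfl⟩
        left_inv := fun p => by
          rcases p with ⟨⟨m, s⟩, hp⟩
          have hm : m = n := hp
          subst hm
          rfl
        right_inv := fun s => rfl } with hκ
    set bV : Module.Basis {i : ι // d i = n} F ↥(piMod F e n X) := (B n).reindex κ.symm
      with hbV
    have hφ : ∀ (i : ι) (h : d i = n),
        φ i (eqToHom (show ((𝟙_ C)⟦n⟧ : C) = (𝟙_ C)⟦d i⟧ by rw [h])) = bV ⟨i, h⟩ := by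
      rintro ⟨m, s⟩ h
      have hm : m = n := h
      subst hm
      show eqToHom rfl ≫ b ⟨m, s⟩ = bV ⟨⟨m, s⟩, h⟩
      rw [eqToHom_refl, Category.id_comp, hbV, Module.Basis.reindex_apply, Equiv.symm_symm]
      rfl
    have hkey := key_bijective F e hconc n ι d ↥(piMod F e n X) φ bV hφ
    have hcomp : ∀ v : ⨁ i : ι, ↥(piMod F e n ((𝟙_ C)⟦d i⟧)),
        (TL F e n ι G v : ((𝟙_ C)⟦n⟧ : C) ⟶ ∐ G) ≫ f =
          DirectSum.toModule F ι ↥(piMod F e n X) φ v := by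
      have hAB : (AddMonoidHom.comp (Preadditive.rightComp ((𝟙_ C)⟦n⟧) f)
            (TL F e n ι G).toAddMonoidHom) =
          (DirectSum.toModule F ι ↥(piMod F e n X) φ).toAddMonoidHom := by
        apply DirectSum.addHom_ext
        intro i x
        show (Preadditive.rightComp ((𝟙_ C)⟦n⟧) f) ((TL F e n ι G) (DirectSum.of _ i x)) =
          (DirectSum.toModule F ι ↥(piMod F e n X) φ) (DirectSum.of _ i x)
        rw [show (DirectSum.of _ i x : ⨁ i : ι, ↥(piMod F e n (G i))) =
          DirectSum.lof F ι (fun i => ↥(piMod F e n (G i))) i x from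
          (DirectSum.lof_eq_of F ι (fun i => ↥(piMod F e n (G i))) i x).symm]
        rw [TL]
        erw [DirectSum.toModule_lof,
          DirectSum.toModule_lof]
        show (x ≫ Sigma.ι G i) ≫ f = φ i x
        rw [hφdef]
        show (x ≫ Sigma.ι G i) ≫ f = x ≫ b i
        exact (Category.assoc _ _ _).trans (congrArg (x ≫ ·) (Sigma.ι_desc b i))
      exact fun v => DFunLike.congr_fun hAB v
    constructor
    · intro y1 y2 hy
      obtain ⟨v1, rfl⟩ := hT.2 y1
      obtain ⟨v2, rfl⟩ := hT.2 y2
      have hy' : (TL F e n ι G v1 : (((𝟙_ C)⟦n⟧ : C) ⟶ ∐ G)) ≫ f =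
          (TL F e n ι G v2 : (((𝟙_ C)⟦n⟧ : C) ⟶ ∐ G)) ≫ f := hy
      rw [hcomp v1, hcomp v2] at hy'
      rw [hkey.1 hy']
    · intro z
      obtain ⟨v, hv⟩ := hkey.2 z
      refine ⟨TL F e n ι G v, ?_⟩
      show (TL F e n ι G v : (((𝟙_ C)⟦n⟧ : C) ⟶ ∐ G)) ≫ f = z
      rw [hcomp v]
      exact hv
  obtain ⟨Z, gm, hm, hdist⟩ := Pretriangulated.distinguished_cocone_triangle f
  have hzero : IsZero Z := by
    apply hgen
    intro n z
    have e1 : tau n (∐ G) (z ≫ hm) ≫ f = 0 := by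
      rw [← tau_natural]
      have : (z ≫ hm) ≫ (shiftFunctor C (1:ℤ)).map f = 0 := by
        rw [Category.assoc,
          show hm ≫ (shiftFunctor C (1:ℤ)).map f = 0 from
            comp_distTriang_mor_zero₃₁ _ hdist, comp_zero]
      rw [this, map_zero]
    have e2 : tau n (∐ G) (z ≫ hm) = 0 := by
      apply (hbij (n-1)).1
      simp only [e1]
      rw [zero_comp]
    have e3 : z ≫ hm = 0 := by
      apply (tau n (∐ G)).injective
      rw [e2, map_zero]
    obtain ⟨y, hy⟩ := Pretriangulated.Triangle.coyoneda_exact₃ _ hdist z e3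
    obtain ⟨x, hx⟩ := (hbij n).2 y
    have hx' : x ≫ f = y := hx
    have h12 : f ≫ (Triangle.mk f gm hm).mor₂ = 0 :=
      comp_distTriang_mor_zero₁₂ _ hdist
    rw [hy, ← hx']
    exact (Category.assoc x f _).trans ((congrArg (x ≫ ·) h12).trans comp_zero)
  have : IsIso f := (Pretriangulated.Triangle.isZero₃_iff_isIso₁ _ hdist).1 hzero
  exact ⟨ι, d, ⟨asIso f⟩⟩

include F e in
lemma hom_ext
    (hcompact : ∀ (ι : Type) [DecidableEq ι] (g : ι → C),
      Function.Bijective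
        (⇑(DirectSum.toAddMonoid
            (fun i => Preadditive.rightComp (𝟙_ C) (Sigma.ι g i)) :
          (⨁ i : ι, ((𝟙_ C) ⟶ g i)) →+ ((𝟙_ C) ⟶ ∐ g))))
    (hgen : ∀ X : C, (∀ (n : ℤ) (f : (𝟙_ C)⟦n⟧ ⟶ X), f = 0) → IsZero X)
    (hconc : ∀ n : ℤ, n ≠ 0 → ∀ f : (𝟙_ C)⟦n⟧ ⟶ 𝟙_ C, f = 0)
    {X Y : C} (f f' : X ⟶ Y)
    (h : ∀ (n : ℤ) (g : (((𝟙_ C)⟦n⟧ : C) ⟶ X)), g ≫ f = g ≫ f') : f = f' := by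
  obtain ⟨ι, d, ⟨w⟩⟩ := exists_decomposition F e hcompact hgen hconc X
  have hw : w.hom ≫ f = w.hom ≫ f' := by
    apply colimit.hom_ext
    rintro ⟨i⟩
    rw [← Category.assoc, ← Category.assoc]
    exact h (d i) (colimit.ι (Discrete.functor fun i => ((𝟙_ C)⟦d i⟧ : C)) ⟨i⟩ ≫ w.hom)
  calc f = w.inv ≫ (w.hom ≫ f) := by rw [Iso.inv_hom_id_assoc]
  _ = w.inv ≫ (w.hom ≫ f') := by rw [hw]
  _ = f' := by rw [Iso.inv_hom_id_assoc]

include F e in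
lemma EF_full_aux
    (hcompact : ∀ (ι : Type) [DecidableEq ι] (g : ι → C),
      Function.Bijective
        (⇑(DirectSum.toAddMonoid
            (fun i => Preadditive.rightComp (𝟙_ C) (Sigma.ι g i)) :
          (⨁ i : ι, ((𝟙_ C) ⟶ g i)) →+ ((𝟙_ C) ⟶ ∐ g))))
    (hgen : ∀ X : C, (∀ (n : ℤ) (f : (𝟙_ C)⟦n⟧ ⟶ X), f = 0) → IsZero X)
    (hconc : ∀ n : ℤ, n ≠ 0 → ∀ f : (𝟙_ C)⟦n⟧ ⟶ 𝟙_ C, f = 0)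
    {X Y : C} (η : (EF F e).obj X ⟶ (EF F e).obj Y) :
    ∃ f : X ⟶ Y, (EF F e).map f = η := by
  classical
  obtain ⟨ι, d, ⟨w⟩⟩ := exists_decomposition F e hcompact hgen hconc X
  set G : ι → C := fun i => (𝟙_ C)⟦d i⟧ with hG
  haveI : HasColimitsOfShape (Discrete ι) C := (inferInstance : HasCoproducts.{0} C) ι
  set La : ∀ n : ℤ, piMod F e n X ⟶ piMod F e n Y := fun n => η.app ⟨n⟩ with hLa
  have hcomm : ∀ (n m : ℤ) (x : (((𝟙_ C)⟦n⟧ : C) ⟶ (𝟙_ C)⟦m⟧)) (h : piMod F e m X),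
      La n ((x ≫ h : (((𝟙_ C)⟦n⟧ : C) ⟶ X))) = x ≫ La m h := by
    intro n m x h
    by_cases hnm : n = m
    · subst hnm
      obtain ⟨r, hr⟩ := (scalarMap_bijective F e n).2 x
      have h1 : (x ≫ h : piMod F e n X) = r • h := by
        rw [piMod_smul, ← hr]
        rfl
      have h2 : (x ≫ La n h : (((𝟙_ C)⟦n⟧ : C) ⟶ Y)) = r • La n h := by
        rw [piMod_smul, ← hr]
        rfl
      rw [h1, h2, map_smul]
    · have hx : x = 0 := hom_shift_eq_zero hconc hnm x
      rw [hx]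
      erw [Limits.zero_comp, Limits.zero_comp]
      exact map_zero _
  set f : X ⟶ Y := w.inv ≫ Sigma.desc (fun i =>
    (La (d i) ((Sigma.ι G i ≫ w.hom : (G i ⟶ X))) : (G i ⟶ Y))) with hfdef
  have hval : ∀ (n : ℤ) (g : piMod F e n X),
      ((g : (((𝟙_ C)⟦n⟧ : C) ⟶ X)) ≫ f) = La n g := by
    intro n g
    set T : (⨁ i : ι, (((𝟙_ C)⟦n⟧ : C) ⟶ G i)) →+ (((𝟙_ C)⟦n⟧ : C) ⟶ ∐ G) :=
      DirectSum.toAddMonoid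
        (fun i => Preadditive.rightComp ((𝟙_ C)⟦n⟧) (Sigma.ι G i)) with hT
    have hTb := compact_shift hcompact n ι G
    set dsc : (∐ G) ⟶ Y := Sigma.desc (fun i =>
      (La (d i) ((Sigma.ι G i ≫ w.hom : (G i ⟶ X))) : (G i ⟶ Y))) with hdsc
    set La' : ((((𝟙_ C)⟦n⟧ : C) ⟶ X) →+ (((𝟙_ C)⟦n⟧ : C) ⟶ Y)) :=
      AddMonoidHom.mk' (fun g => La n g) (fun a b => map_add (La n).hom a b) with hLa'
    have hAB : (AddMonoidHom.comp (Preadditive.rightComp ((𝟙_ C)⟦n⟧) dsc) T) =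
        (AddMonoidHom.comp La'
          (AddMonoidHom.comp (Preadditive.rightComp ((𝟙_ C)⟦n⟧) w.hom) T)) := by
      apply DirectSum.addHom_ext
      intro i x
      simp only [AddMonoidHom.comp_apply, hT, DirectSum.toAddMonoid_of]
      show ((x ≫ Sigma.ι G i) ≫ dsc) = La' ((x ≫ Sigma.ι G i) ≫ w.hom)
      rw [hLa']
      show ((x ≫ Sigma.ι G i) ≫ dsc) =
        La n (((x ≫ Sigma.ι G i) ≫ w.hom : (((𝟙_ C)⟦n⟧ : C) ⟶ X)))
      rw [hdsc, Category.assoc, colimit.ι_desc]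
      show x ≫ (La (d i) ((Sigma.ι G i ≫ w.hom : (G i ⟶ X))) : (G i ⟶ Y)) = _
      rw [Category.assoc]
      exact (hcomm n (d i) x _).symm
    obtain ⟨v, hv⟩ := hTb.2 ((g ≫ w.inv : (((𝟙_ C)⟦n⟧ : C) ⟶ ∐ G)))
    have h1 := DFunLike.congr_fun hAB v
    simp only [AddMonoidHom.comp_apply] at h1
    rw [hv] at h1
    have e4 : ((g ≫ w.inv : (((𝟙_ C)⟦n⟧ : C) ⟶ ∐ G)) ≫ dsc) =
        La n (((g ≫ w.inv : (((𝟙_ C)⟦n⟧ : C) ⟶ ∐ G)) ≫ w.hom :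
          (((𝟙_ C)⟦n⟧ : C) ⟶ X))) := h1
    have s1 : (g : (((𝟙_ C)⟦n⟧ : C) ⟶ X)) ≫ f = (g ≫ w.inv) ≫ dsc := by
      rw [hfdef]; exact (Category.assoc _ _ _).symm
    have s3 : La n ((g ≫ w.inv) ≫ w.hom : (((𝟙_ C)⟦n⟧ : C) ⟶ X)) = La n g :=
      congrArg (fun t => La n t) ((Category.assoc _ _ _).trans
        ((congrArg (g ≫ ·) w.inv_hom_id).trans (Category.comp_id _)))
    exact s1.trans (e4.trans s3)
  refine ⟨f, ?_⟩
  apply NatTrans.ext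
  funext nn
  apply ModuleCat.hom_ext
  apply LinearMap.ext
  intro g
  show (g ≫ f : (((𝟙_ C)⟦nn.as⟧ : C) ⟶ Y)) = η.app nn g
  rw [hval nn.as g]
  rcases nn with ⟨n⟩
  rfl

end Triangulated

include F e in
lemma EF_essSurj
    (hcompact : ∀ (ι : Type) [DecidableEq ι] (g : ι → C),
      Function.Bijective
        (⇑(DirectSum.toAddMonoid
            (fun i => Preadditive.rightComp (𝟙_ C) (Sigma.ι g i)) :
          (⨁ i : ι, ((𝟙_ C) ⟶ g i)) →+ ((𝟙_ C) ⟶ ∐ g))))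
    (hconc : ∀ n : ℤ, n ≠ 0 → ∀ f : (𝟙_ C)⟦n⟧ ⟶ 𝟙_ C, f = 0)
    (M : Discrete ℤ ⥤ ModuleCat F) :
    ∃ X : C, Nonempty ((EF F e).obj X ≅ M) := by
  classical
  set ι := Σ n : ℤ, ↥(Module.Basis.ofVectorSpaceIndex F ↥(M.obj ⟨n⟩)) with hι
  set d : ι → ℤ := Sigma.fst with hd
  set G : ι → C := fun i => (𝟙_ C)⟦d i⟧ with hG
  haveI : HasColimitsOfShape (Discrete ι) C := (inferInstance : HasCoproducts.{0} C) ι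
  refine ⟨∐ G, ⟨Discrete.natIso (fun nn => ?_)⟩⟩
  obtain ⟨n⟩ := nn
  set κ : {i : ι // d i = n} ≃ ↥(Module.Basis.ofVectorSpaceIndex F ↥(M.obj ⟨n⟩)) :=
    { toFun := fun p => p.2 ▸ p.1.2
      invFun := fun s => ⟨⟨n, s⟩, rfl⟩
      left_inv := fun p => by
        rcases p with ⟨⟨m, s⟩, hp⟩
        have hm : m = n := hp
        subst hm
        rfl
      right_inv := fun s => rfl } with hκ
  set bV : Module.Basis {i : ι // d i = n} F ↥(M.obj ⟨n⟩) :=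
    (Module.Basis.ofVectorSpace F ↥(M.obj ⟨n⟩)).reindex κ.symm with hbV
  set φ : ∀ i : ι, ↥(piMod F e n ((𝟙_ C)⟦d i⟧)) →ₗ[F] ↥(M.obj ⟨n⟩) := fun i =>
    if h : d i = n then
      (LinearMap.toSpanSingleton F ↥(M.obj ⟨n⟩) (bV ⟨i, h⟩)).comp
        (((scalarEquiv F e n).symm.toLinearMap).comp
          ((piMap F e n (eqToHom (show ((𝟙_ C)⟦d i⟧ : C) = (𝟙_ C)⟦n⟧ by rw [h]))
            ).hom))
    else 0 with hφdef
  have hone : scalarEquiv F e n 1 =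
      (eqToHom (rfl : ((𝟙_ C)⟦n⟧ : C) = (𝟙_ C)⟦n⟧) : ↥(piMod F e n ((𝟙_ C)⟦n⟧))) := by
    show (shiftFunctor C n).map (e 1) = _
    rw [show ((e 1 : End (𝟙_ C)) : 𝟙_ C ⟶ 𝟙_ C) = 𝟙 (𝟙_ C) from map_one e]
    simp
  have hφ : ∀ (i : ι) (h : d i = n),
      φ i (eqToHom (show ((𝟙_ C)⟦n⟧ : C) = (𝟙_ C)⟦d i⟧ by rw [h])) = bV ⟨i, h⟩ := by
    intro i h
    simp only [hφdef]
    rw [dif_pos h]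
    erw [LinearMap.comp_apply, LinearMap.comp_apply]
    have harg : (piMap F e n (eqToHom (show ((𝟙_ C)⟦d i⟧ : C) = (𝟙_ C)⟦n⟧ by rw [h]))).hom
        (eqToHom (show ((𝟙_ C)⟦n⟧ : C) = (𝟙_ C)⟦d i⟧ by rw [h])) =
        scalarEquiv F e n 1 := by
      rw [hone]
      show eqToHom _ ≫ eqToHom _ = eqToHom rfl
      exact eqToHom_trans _ _
    erw [harg]
    rw [show ((scalarEquiv F e n).symm.toLinearMap) (scalarEquiv F e n 1) =
      (1 : F) from (scalarEquiv F e n).symm_apply_apply 1]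
    rw [LinearMap.toSpanSingleton_apply, one_smul]
  have hkey := key_bijective F e hconc n ι d ↥(M.obj ⟨n⟩) φ bV hφ
  have hTb := TL_bijective F e hcompact n ι G
  set L : ↥(piMod F e n (∐ G)) ≃ₗ[F] ↥(M.obj ⟨n⟩) :=
    ((LinearEquiv.ofBijective (TL F e n ι G) hTb).symm.trans
      (LinearEquiv.ofBijective (DirectSum.toModule F ι ↥(M.obj ⟨n⟩) φ) hkey)) with hL
  exact (L.toModuleIso ≪≫ Iso.refl (M.obj ⟨n⟩))

end Stmt17Aux

open Stmt17Aux

/-- Let `𝒯` be a tensor triangulated category with arbitrary coproducts,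
compactly generated by the shifts of its unit `𝟙` (i.e. `𝟙` is compact:
`Hom(𝟙, −)` commutes with coproducts, and `X = 0` iff `Hom(Σⁿ𝟙, X) = 0` for
all `n`), such that `Hom(Σⁿ𝟙, 𝟙) = 0` for `n ≠ 0` and `F := End 𝟙` is a field.
Then every object of `𝒯` is isomorphic to a coproduct of shifts of `𝟙`, and
the functor `X ↦ π_*(X) = Hom(Σ^*𝟙, X)` is an equivalence between `𝒯` and the
category of `ℤ`-graded `F`-vector spaces. -/
theorem stmt17 {C : Type u} [Category.{0} C] [HasZeroObject C] [Preadditive C]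
    [HasShift C ℤ] [∀ n : ℤ, (shiftFunctor C n).Additive] [Pretriangulated C]
    [MonoidalCategory C] [SymmetricCategory C] [MonoidalPreadditive C]
    [HasCoproducts.{0} C]
    -- the unit is a compact object
    (hcompact : ∀ (ι : Type) [DecidableEq ι] (g : ι → C),
      Function.Bijective
        (⇑(DirectSum.toAddMonoid
            (fun i => Preadditive.rightComp (𝟙_ C) (Sigma.ι g i)) :
          (⨁ i : ι, ((𝟙_ C) ⟶ g i)) →+ ((𝟙_ C) ⟶ ∐ g))))
    -- the shifts of the unit generate
    (hgen : ∀ X : C, (∀ (n : ℤ) (f : (𝟙_ C)⟦n⟧ ⟶ X), f = 0) → IsZero X)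
    -- the graded endomorphism ring of the unit is concentrated in degree zero
    (hconc : ∀ n : ℤ, n ≠ 0 → ∀ f : (𝟙_ C)⟦n⟧ ⟶ 𝟙_ C, f = 0)
    -- `F := End 𝟙` is a field
    (F : Type) [Field F] (e : F ≃+* End (𝟙_ C)) :
    (∀ X : C, ∃ (ι : Type) (d : ι → ℤ),
        Nonempty (X ≅ ∐ fun i : ι => (𝟙_ C)⟦d i⟧)) ∧
      ∃ E : C ≌ (Discrete ℤ ⥤ ModuleCat F),
        ∀ (X : C) (i : ℤ),
          Nonempty ((((E.functor.obj X).obj ⟨i⟩ : ModuleCat F) : Type) ≃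
            ((𝟙_ C)⟦i⟧ ⟶ X)) := by
  constructor
  · intro X
    obtain ⟨ι, d, ⟨w⟩⟩ := exists_decomposition F e hcompact hgen hconc X
    exact ⟨ι, d, ⟨w.symm⟩⟩
  · haveI hFull : (EF F e).Full :=
      ⟨fun {X Y} η => EF_full_aux F e hcompact hgen hconc η⟩
    haveI hFaithful : (EF F e).Faithful := by
      refine ⟨fun {X Y} {f f'} hff => ?_⟩
      apply hom_ext F e hcompact hgen hconc
      intro n g
      have h1 := congrArg (fun (t : (EF F e).obj X ⟶ (EF F e).obj Y) =>
        t.app ⟨n⟩) hff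
      exact DFunLike.congr_fun (congrArg ModuleCat.Hom.hom h1) g
    haveI hES : (EF F e).EssSurj := by
      refine ⟨fun M => ?_⟩
      obtain ⟨X, ⟨iso⟩⟩ := EF_essSurj F e hcompact hconc M
      exact ⟨X, ⟨iso⟩⟩
    haveI : (EF F e).IsEquivalence := {}
    refine ⟨(EF F e).asEquivalence, ?_⟩
    intro X i
    exact ⟨Equiv.refl _⟩
end
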